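/- On the elliptic curve E₁₂ : y² = x³ + x² + x over ℚ(i), the point P = (i, i) lies on the curve and has exact order 8; in particular 2P = (−1, i), 4P = (0, 0), and 8P = O. -/

import Mathlib

open WeierstrassCurve.Affine

/-- The elliptic curve `E₁₂ : y² = x³ + x² + x`. -/
def E12 (K : Type*) [CommRing K] : WeierstrassCurve.Affine K :=
  { a₁ := 0, a₂ := 1, a₃ := 0, a₄ := 1, a₆ := 0 }

private lemma some_congr' {F : Type*} [Field F] {W : WeierstrassCurve.Affine F}
    {x₁ y₁ x₂ y₂ : F} (hx : x₁ = x₂) (hy : y₁ = y₂) (h₁ : W.Nonsingular x₁ y₁)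
    (h₂ : W.Nonsingular x₂ y₂) :
    WeierstrassCurve.Affine.Point.some _ _ h₁ = WeierstrassCurve.Affine.Point.some _ _ h₂ := by
  subst hx; subst hy; rfl

open scoped Classical in
/-- On `E₁₂ : y² = x³ + x² + x` over `ℚ(i)`, the point `P = (i, i)` is a nonsingular point of
exact order 8, with `2P = (−1, i)`, `4P = (0, 0)` and `8P = O`. -/
theorem E12_point_order_eight {K : Type*} [Field K] [CharZero K]
    (i : K) (hi : i ^ 2 = -1) :
    ∃ (h1 : (E12 K).Nonsingular i i) (h2 : (E12 K).Nonsingular (-1) i)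
      (h3 : (E12 K).Nonsingular 0 0),
      addOrderOf (WeierstrassCurve.Affine.Point.some _ _ h1) = 8 ∧
      (2 : ℤ) • (WeierstrassCurve.Affine.Point.some _ _ h1) = WeierstrassCurve.Affine.Point.some _ _ h2 ∧
      (4 : ℤ) • (WeierstrassCurve.Affine.Point.some _ _ h1) = WeierstrassCurve.Affine.Point.some _ _ h3 ∧
      (8 : ℤ) • (WeierstrassCurve.Affine.Point.some _ _ h1) = 0 := by
  have hi0 : i ≠ 0 := by
    intro h; rw [h] at hi; norm_num at hi
  have h2K : (2 : K) ≠ 0 := two_ne_zero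
  have h2i : (2 : K) * i ≠ 0 := mul_ne_zero h2K hi0
  have key : ∀ a : K, i - a = 2 * i → i ≠ a := by
    intro a ha h
    apply h2i
    rw [← ha, h, sub_self]
  have h1 : (E12 K).Nonsingular i i := by
    rw [nonsingular_iff]
    refine ⟨?_, Or.inr ?_⟩
    · rw [equation_iff]
      simp only [E12]
      linear_combination (-i) * hi
    · simp only [E12]
      exact key _ (by ring)
  have h2 : (E12 K).Nonsingular (-1) i := by
    rw [nonsingular_iff]
    refine ⟨?_, Or.inr ?_⟩
    · rw [equation_iff]
      simp only [E12]
      linear_combination hi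
    · simp only [E12]
      exact key _ (by ring)
  have h3 : (E12 K).Nonsingular 0 0 := by
    rw [nonsingular_zero]
    simp [E12]
  refine ⟨h1, h2, h3, ?_⟩
  have hyne1 : i ≠ (E12 K).negY i i := by
    simp only [E12, negY]
    exact key _ (by ring)
  have hyne2 : i ≠ (E12 K).negY (-1) i := by
    simp only [E12, negY]
    exact key _ (by ring)
  have hden1 : i - (E12 K).negY i i ≠ 0 := sub_ne_zero.mpr hyne1
  have hden2 : i - (E12 K).negY (-1) i ≠ 0 := sub_ne_zero.mpr hyne2
  have hs1 : (E12 K).slope i i i i = 1 + i := by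
    rw [slope_of_Y_ne rfl hyne1, div_eq_iff hden1]
    simp only [E12, negY]
    linear_combination hi
  have hs2 : (E12 K).slope (-1) (-1) i i = -i := by
    rw [slope_of_Y_ne rfl hyne2, div_eq_iff hden2]
    simp only [E12, negY]
    linear_combination 2 * hi
  have hP2 : WeierstrassCurve.Affine.Point.some _ _ h1 + WeierstrassCurve.Affine.Point.some _ _ h1 =
      WeierstrassCurve.Affine.Point.some _ _ h2 := by
    rw [WeierstrassCurve.Affine.Point.add_self_of_Y_ne hyne1]
    apply some_congr'
    · rw [hs1]
      simp only [addX, E12]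
      linear_combination hi
    · rw [hs1]
      simp only [addY, negAddY, addX, negY, E12]
      linear_combination (-i) * hi
  have hP4 : WeierstrassCurve.Affine.Point.some _ _ h2 + WeierstrassCurve.Affine.Point.some _ _ h2 =
      WeierstrassCurve.Affine.Point.some _ _ h3 := by
    rw [WeierstrassCurve.Affine.Point.add_self_of_Y_ne hyne2]
    apply some_congr'
    · rw [hs2]
      simp only [addX, E12]
      linear_combination hi
    · rw [hs2]
      simp only [addY, negAddY, addX, negY, E12]
      linear_combination i * hi
  have hP8 : WeierstrassCurve.Affine.Point.some _ _ h3 + WeierstrassCurve.Affine.Point.some _ _ h3 = 0 := by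
    apply WeierstrassCurve.Affine.Point.add_self_of_Y_eq
    simp [E12, negY]
  set P := WeierstrassCurve.Affine.Point.some _ _ h1 with hP
  have e2 : (2 : ℤ) • P = WeierstrassCurve.Affine.Point.some _ _ h2 := by
    rw [two_zsmul]; exact hP2
  have e4 : (4 : ℤ) • P = WeierstrassCurve.Affine.Point.some _ _ h3 := by
    have h44 : (4 : ℤ) • P = (2 : ℤ) • ((2 : ℤ) • P) := by
      rw [smul_smul]; norm_num
    rw [h44, e2, two_zsmul]; exact hP4
  have e8 : (8 : ℤ) • P = 0 := by
    have h88 : (8 : ℤ) • P = (2 : ℤ) • ((4 : ℤ) • P) := by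
      rw [smul_smul]; norm_num
    rw [h88, e4, two_zsmul]; exact hP8
  refine ⟨?_, e2, e4, e8⟩
  have h8n : (8 : ℕ) • P = 0 := by
    have := e8
    rwa [show ((8 : ℤ)) = ((8 : ℕ) : ℤ) by norm_num, natCast_zsmul] at this
  have hdvd8 : addOrderOf P ∣ 8 := addOrderOf_dvd_of_nsmul_eq_zero h8n
  have hnd4 : ¬ addOrderOf P ∣ 4 := by
    intro h
    have h4n : (4 : ℕ) • P = 0 := addOrderOf_dvd_iff_nsmul_eq_zero.mp h
    have h4z : (4 : ℤ) • P = 0 := by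
      rwa [show ((4 : ℤ)) = ((4 : ℕ) : ℤ) by norm_num, natCast_zsmul]
    rw [e4] at h4z
    exact WeierstrassCurve.Affine.Point.some_ne_zero h3 h4z
  have hpos : 0 < addOrderOf P := Nat.pos_of_dvd_of_pos hdvd8 (by norm_num)
  have hle : addOrderOf P ≤ 8 := Nat.le_of_dvd (by norm_num) hdvd8
  interval_cases h : addOrderOf P <;> revert hdvd8 hnd4 <;> norm_num
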